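/- Let m ∈ ℕ, m ≥ 1, and r ∈ ℝ such that 1, r√m, r² are linearly independent over ℚ. Let Λ ⊆ ℂ² be the lattice spanned over ℤ by the columns of the matrix [[1, 1+ri, √(-m), √(-m)(1+ri)],[1, ri, -√(-m), -√(-m)ri]] where √(-m) = i√m. Then the ring of matrices T ∈ M₂(ℂ) with TΛ ⊆ Λ equals { diag(n₁+n₂√(-m), n₁-n₂√(-m)) : n₁, n₂ ∈ ℤ }, which is isomorphic to ℤ[√(-m)]. -/
import Mathlib

open Matrix Complex

set_option maxHeartbeats 1000000 in
theorem stmt_16 (m : ℕ) (hm : 1 ≤ m) (r : ℝ)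
    (hli : LinearIndependent ℚ ![(1 : ℝ), r * Real.sqrt m, r ^ 2])
    (s : ℂ) (hs : s = Complex.I * (Real.sqrt m : ℂ))
    (Λ : AddSubgroup (Fin 2 → ℂ))
    (hΛ : Λ = AddSubgroup.closure
      {![1, 1], ![1 + r * Complex.I, r * Complex.I],
       ![s, -s], ![s * (1 + r * Complex.I), -s * (r * Complex.I)]}) :
    {T : Matrix (Fin 2) (Fin 2) ℂ | ∀ v ∈ Λ, T.mulVec v ∈ Λ} =
      {T | ∃ n₁ n₂ : ℤ, T = !![(n₁ : ℂ) + n₂ * s, 0; 0, (n₁ : ℂ) - n₂ * s]} := by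
  set q : ℝ := Real.sqrt m with hqdef
  have hmpos : 0 < (m:ℝ) := by exact_mod_cast Nat.lt_of_lt_of_le Nat.zero_lt_one hm
  have hq2 : q ^ 2 = (m:ℝ) := Real.sq_sqrt (le_of_lt hmpos)
  have hqpos : 0 < q := Real.sqrt_pos.mpr hmpos
  have hq0 : q ≠ 0 := ne_of_gt hqpos
  have hmz : (m:ℤ) ≠ 0 := by exact_mod_cast Nat.pos_iff_ne_zero.mp (Nat.lt_of_lt_of_le Nat.zero_lt_one hm)
  have hsre : s.re = 0 := by rw [hs]; simp
  have hsim : s.im = q := by rw [hs]; simp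
  have hq2C : ((q:ℝ):ℂ)^2 = (m:ℂ) := by exact_mod_cast congrArg (fun x : ℝ => (x:ℂ)) hq2
  have hs2 : s * s = -(m:ℂ) := by
    rw [hs]; linear_combination ((q:ℂ)^2) * Complex.I_sq - hq2C
  have hind : ∀ A B C : ℤ, (A:ℝ) + (B:ℝ)*(r*q) + (C:ℝ)*r^2 = 0 → A = 0 ∧ B = 0 ∧ C = 0 := by
    intro A B C hrel
    have h2 := Fintype.linearIndependent_iff.mp hli ![(A:ℚ), (B:ℚ), (C:ℚ)] ?_
    · exact ⟨by simpa using h2 0, by simpa using h2 1, by simpa using h2 2⟩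
    · simp only [Fin.sum_univ_three, Matrix.cons_val_zero, Matrix.cons_val_one, Matrix.head_cons,
        Matrix.cons_val_two, Matrix.tail_cons, Rat.smul_def]
      push_cast
      linear_combination hrel
  set v1 : Fin 2 → ℂ := ![1, 1] with hv1def
  set v2 : Fin 2 → ℂ := ![1 + r * Complex.I, r * Complex.I] with hv2def
  set v3 : Fin 2 → ℂ := ![s, -s] with hv3def
  set v4 : Fin 2 → ℂ := ![s * (1 + r * Complex.I), -s * (r * Complex.I)] with hv4def
  have hv1m : v1 ∈ Λ := by rw [hΛ]; exact AddSubgroup.subset_closure (by simp)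
  have hv2m : v2 ∈ Λ := by rw [hΛ]; exact AddSubgroup.subset_closure (by simp)
  have hv3m : v3 ∈ Λ := by rw [hΛ]; exact AddSubgroup.subset_closure (by simp)
  have hv4m : v4 ∈ Λ := by rw [hΛ]; exact AddSubgroup.subset_closure (by simp)
  have hLam : ∀ v ∈ Λ, ∃ a b c d : ℤ, v = a • v1 + b • v2 + c • v3 + d • v4 := by
    intro v hv
    let L : AddSubgroup (Fin 2 → ℂ) := {
      carrier := {v | ∃ a b c d : ℤ, v = a • v1 + b • v2 + c • v3 + d • v4}
      zero_mem' := ⟨0,0,0,0, by simp⟩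
      add_mem' := by
        rintro x y ⟨a,b,c,d,rfl⟩ ⟨a',b',c',d',rfl⟩
        exact ⟨a+a', b+b', c+c', d+d', by simp only [add_smul]; abel⟩
      neg_mem' := by
        rintro x ⟨a,b,c,d,rfl⟩
        exact ⟨-a,-b,-c,-d, by simp only [neg_smul]; abel⟩ }
    have hle : Λ ≤ L := by
      rw [hΛ]
      refine (AddSubgroup.closure_le L).mpr ?_
      rintro x hx
      simp only [Set.mem_insert_iff, Set.mem_singleton_iff] at hx
      rcases hx with rfl | rfl | rfl | rfl
      · exact ⟨1,0,0,0, by simp⟩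
      · exact ⟨0,1,0,0, by simp⟩
      · exact ⟨0,0,1,0, by simp⟩
      · exact ⟨0,0,0,1, by simp⟩
    exact hle hv
  ext T
  simp only [Set.mem_setOf_eq]
  constructor
  · intro hT
    obtain ⟨a1,b1,c1,d1,hco1⟩ := hLam _ (hT v1 hv1m)
    obtain ⟨a2,b2,c2,d2,hco2⟩ := hLam _ (hT v2 hv2m)
    obtain ⟨a3,b3,c3,d3,hco3⟩ := hLam _ (hT v3 hv3m)
    obtain ⟨a4,b4,c4,d4,hco4⟩ := hLam _ (hT v4 hv4m)
    have w10r := congrArg Complex.re (congrFun hco1 0)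
    have w10i := congrArg Complex.im (congrFun hco1 0)
    have w11r := congrArg Complex.re (congrFun hco1 1)
    have w11i := congrArg Complex.im (congrFun hco1 1)
    have w20r := congrArg Complex.re (congrFun hco2 0)
    have w20i := congrArg Complex.im (congrFun hco2 0)
    have w21r := congrArg Complex.re (congrFun hco2 1)
    have w21i := congrArg Complex.im (congrFun hco2 1)
    have w30r := congrArg Complex.re (congrFun hco3 0)
    have w30i := congrArg Complex.im (congrFun hco3 0)
    have w31r := congrArg Complex.re (congrFun hco3 1)
    have w31i := congrArg Complex.im (congrFun hco3 1)
    have w40r := congrArg Complex.re (congrFun hco4 0)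
    have w40i := congrArg Complex.im (congrFun hco4 0)
    have w41r := congrArg Complex.re (congrFun hco4 1)
    have w41i := congrArg Complex.im (congrFun hco4 1)
    simp only [hv1def, hv2def, hv3def, hv4def, Matrix.mulVec, dotProduct, Fin.sum_univ_two,
        Pi.add_apply, Pi.smul_apply, Pi.mul_apply, Pi.intCast_apply, zsmul_eq_mul, Matrix.cons_val_zero, Matrix.cons_val_one,
        Matrix.head_cons, Complex.add_re, Complex.add_im, Complex.mul_re, Complex.mul_im,
        Complex.one_re, Complex.one_im, Complex.I_re, Complex.I_im, Complex.ofReal_re,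
        Complex.ofReal_im, Complex.intCast_re, Complex.intCast_im, Complex.neg_re,
        Complex.neg_im, hsre, hsim] at w10r w10i w11r w11i w20r w20i w21r w21i w30r w30i w31r w31i w40r w40i w41r w41i
    have e1a : (T 0 0).re + (T 0 1).re = (a1:ℝ) + b1 - d1*(r*q) := by linear_combination w10r
    have e1b : (T 0 0).im + (T 0 1).im = (b1:ℝ)*r + ((c1:ℝ)+d1)*q := by linear_combination w10i
    have e1c : (T 1 0).re + (T 1 1).re = (a1:ℝ) + d1*(r*q) := by linear_combination w11r
    have e1d : (T 1 0).im + (T 1 1).im = (b1:ℝ)*r - c1*q := by linear_combination w11i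
    have e2a : (T 0 0).re - r*((T 0 0).im + (T 0 1).im) = (a2:ℝ) + b2 - d2*(r*q) := by linear_combination w20r
    have e2b : (T 0 0).im + r*((T 0 0).re + (T 0 1).re) = (b2:ℝ)*r + ((c2:ℝ)+d2)*q := by linear_combination w20i
    have e2c : (T 1 0).re - r*((T 1 0).im + (T 1 1).im) = (a2:ℝ) + d2*(r*q) := by linear_combination w21r
    have e2d : (T 1 0).im + r*((T 1 0).re + (T 1 1).re) = (b2:ℝ)*r - c2*q := by linear_combination w21i
    have e3a : -(q*((T 0 0).im - (T 0 1).im)) = (a3:ℝ) + b3 - d3*(r*q) := by linear_combination w30r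
    have e3b : q*((T 0 0).re - (T 0 1).re) = (b3:ℝ)*r + ((c3:ℝ)+d3)*q := by linear_combination w30i
    have e3c : -(q*((T 1 0).im - (T 1 1).im)) = (a3:ℝ) + d3*(r*q) := by linear_combination w31r
    have e3d : q*((T 1 0).re - (T 1 1).re) = (b3:ℝ)*r - c3*q := by linear_combination w31i
    have e4a : -(q*((T 0 0).im + r*((T 0 0).re - (T 0 1).re))) = (a4:ℝ) + b4 - d4*(r*q) := by linear_combination w40r
    have e4b : q*((T 0 0).re - r*((T 0 0).im - (T 0 1).im)) = (b4:ℝ)*r + ((c4:ℝ)+d4)*q := by linear_combination w40i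
    have e4c : -(q*((T 1 0).im + r*((T 1 0).re - (T 1 1).re))) = (a4:ℝ) + d4*(r*q) := by linear_combination w41r
    have e4d : q*((T 1 0).re - r*((T 1 0).im - (T 1 1).im)) = (b4:ℝ)*r - c4*q := by linear_combination w41i
    have T1 : ((a4 + b4 + (c2+d2)*(m:ℤ) : ℤ):ℝ) + ((b2 - a1 - b1 + c3 + d3 - d4 : ℤ):ℝ)*(r*q) + ((d1*(m:ℤ) + b3 : ℤ):ℝ)*r^2 = 0 := by
      push_cast
      linear_combination (-1)*e4a - r*e3b - q*e2b + (r*q)*e1a - (((c2:ℝ)+d2) + d1*r^2)*hq2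
    have T2 : ((a2+b2)*(m:ℤ) - (c4+d4)*(m:ℤ) + ((0:ℤ)) + ((0:ℤ)))*1 + (0:ℝ) = 0 ∨ True := Or.inr trivial
    have T2' : (((a2+b2)*(m:ℤ) - (c4+d4)*(m:ℤ) : ℤ):ℝ) + (((c1+d1-d2)*(m:ℤ) + a3+b3 - b4 : ℤ):ℝ)*(r*q) + (((b1-d3)*(m:ℤ) : ℤ):ℝ)*r^2 = 0 := by
      push_cast
      linear_combination q*e4b - r*q*e3a - (m:ℝ)*e2a - (m:ℝ)*r*e1b - ((T 0 0).re - ((c4:ℝ)+d4) - d3*r^2)*hq2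
    have T3 : ((a4 - c2*(m:ℤ) : ℤ):ℝ) + ((d4 + b2 - a1 - c3 : ℤ):ℝ)*(r*q) + ((b3 - d1*(m:ℤ) : ℤ):ℝ)*r^2 = 0 := by
      push_cast
      linear_combination (-1)*e4c - r*e3d - q*e2d + (r*q)*e1c + ((c2:ℝ) + d1*r^2)*hq2
    have T4 : ((a2*(m:ℤ) + c4*(m:ℤ) : ℤ):ℝ) + (((d2-c1)*(m:ℤ) + a3 - b4 : ℤ):ℝ)*(r*q) + (((b1+d3)*(m:ℤ) : ℤ):ℝ)*r^2 = 0 := by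
      push_cast
      linear_combination q*e4d - r*q*e3c - (m:ℝ)*e2c - (m:ℝ)*r*e1d - ((T 1 0).re + (c4:ℝ) + d3*r^2)*hq2
    obtain ⟨-, -, h31⟩ := hind _ _ _ T1
    obtain ⟨-, -, h32⟩ := hind _ _ _ T2'
    obtain ⟨-, -, h33⟩ := hind _ _ _ T3
    obtain ⟨-, -, h34⟩ := hind _ _ _ T4
    have hd1m : d1 * (m:ℤ) = 0 := by linarith
    have hd1 : d1 = 0 := by
      rcases mul_eq_zero.mp hd1m with h | h
      · exact h
      · exact absurd h hmz
    have hb3 : b3 = 0 := by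
      have : d1 * (m:ℤ) + b3 = 0 := h31
      linarith
    have hb1a : b1 - d3 = 0 := by
      rcases mul_eq_zero.mp h32 with h | h
      · exact h
      · exact absurd h hmz
    have hb1b : b1 + d3 = 0 := by
      rcases mul_eq_zero.mp h34 with h | h
      · exact h
      · exact absurd h hmz
    have hb1 : b1 = 0 := by omega
    have hd3 : d3 = 0 := by omega
    subst hb1 hd1 hb3 hd3
    push_cast at e1a e1b e1c e1d e3a e3b e3c e3d
    have hdiff1 : (T 0 0).re - (T 0 1).re = (c3:ℝ) := mul_left_cancel₀ hq0 (by linear_combination e3b)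
    have hdiff2 : (T 1 0).re - (T 1 1).re = -(c3:ℝ) := mul_left_cancel₀ hq0 (by linear_combination e3d)
    have U1 : ((2*(a2+b2) - a1 - c3 : ℤ):ℝ) + ((2*(c1-d2) : ℤ):ℝ)*(r*q) + ((0:ℤ):ℝ)*r^2 = 0 := by
      push_cast
      linear_combination (-2)*e2a - 2*r*e1b + e1a + hdiff1
    have U2 : ((2*(c2+d2)*(m:ℤ) - c1*(m:ℤ) + a3 : ℤ):ℝ) + ((2*(b2-a1) : ℤ):ℝ)*(r*q) + ((0:ℤ):ℝ)*r^2 = 0 := by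
      push_cast
      linear_combination (-2*q)*e2b + 2*r*q*e1a + q*e1b - e3a - (2*((c2:ℝ)+d2) - c1)*hq2
    have U3 : ((2*a2 - a1 + c3 : ℤ):ℝ) + ((2*(d2-c1) : ℤ):ℝ)*(r*q) + ((0:ℤ):ℝ)*r^2 = 0 := by
      push_cast
      linear_combination (-2)*e2c - 2*r*e1d + e1c + hdiff2
    have U4 : ((-2*c2*(m:ℤ) + c1*(m:ℤ) + a3 : ℤ):ℝ) + ((2*(b2-a1) : ℤ):ℝ)*(r*q) + ((0:ℤ):ℝ)*r^2 = 0 := by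
      push_cast
      linear_combination (-2*q)*e2d + 2*r*q*e1c + q*e1d - e3c + (2*(c2:ℝ) - c1)*hq2
    obtain ⟨hU1a, hU1b, -⟩ := hind _ _ _ U1
    obtain ⟨hU2a, hU2b, -⟩ := hind _ _ _ U2
    obtain ⟨hU3a, -, -⟩ := hind _ _ _ U3
    obtain ⟨hU4a, -, -⟩ := hind _ _ _ U4
    have hc3 : c3 = a1 := by omega
    have h4c2 : (4*c2) * (m:ℤ) = 0 := by linear_combination hU2a - hU4a + (m:ℤ)*hU1b
    have hc2 : c2 = 0 := by
      rcases mul_eq_zero.mp h4c2 with h | h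
      · omega
      · exact absurd h hmz
    have ha3 : a3 + c1*(m:ℤ) = 0 := by
      rw [hc2] at hU4a; linear_combination hU4a
    have hc3R : (c3:ℝ) = (a1:ℝ) := by exact_mod_cast hc3
    have hA3R : (a3:ℝ) + (c1:ℝ)*(m:ℝ) = 0 := by exact_mod_cast congrArg (fun z : ℤ => (z:ℝ)) ha3
    have hx1 : (T 0 0).re = (a1:ℝ) := by linarith
    have hy1 : (T 0 1).re = 0 := by linarith
    have hz1 : (T 1 0).re = 0 := by linarith
    have hw1 : (T 1 1).re = (a1:ℝ) := by linarith
    have hx2 : (T 0 0).im = (c1:ℝ)*q := mul_left_cancel₀ hq0 (by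
      linear_combination (q/2)*e1b - (1/2)*e3a - (1/2)*hA3R - ((c1:ℝ)/2)*hq2)
    have hy2 : (T 0 1).im = 0 := mul_left_cancel₀ hq0 (by
      linear_combination (q/2)*e1b + (1/2)*e3a + (1/2)*hA3R + ((c1:ℝ)/2)*hq2)
    have hz2 : (T 1 0).im = 0 := mul_left_cancel₀ hq0 (by
      linear_combination (q/2)*e1d - (1/2)*e3c - (1/2)*hA3R - ((c1:ℝ)/2)*hq2)
    have hw2 : (T 1 1).im = -((c1:ℝ)*q) := mul_left_cancel₀ hq0 (by
      linear_combination (q/2)*e1d + (1/2)*e3c + (1/2)*hA3R + ((c1:ℝ)/2)*hq2)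
    refine ⟨a1, c1, ?_⟩
    have hT00 : T 0 0 = (a1:ℂ) + (c1:ℂ)*s := by
      apply Complex.ext
      · rw [hx1]; simp [hsre, hsim]
      · rw [hx2]; simp [hsre, hsim]
    have hT01 : T 0 1 = 0 := by
      apply Complex.ext
      · rw [hy1]; simp
      · rw [hy2]; simp
    have hT10 : T 1 0 = 0 := by
      apply Complex.ext
      · rw [hz1]; simp
      · rw [hz2]; simp
    have hT11 : T 1 1 = (a1:ℂ) - (c1:ℂ)*s := by
      apply Complex.ext
      · rw [hw1]; simp [hsre, hsim]
      · rw [hw2]; simp [hsre, hsim]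
    ext i j
    fin_cases i <;> fin_cases j <;>
      simp [hT00, hT01, hT10, hT11]
  · rintro ⟨n₁, n₂, rfl⟩
    intro v hv
    have hcomap : Λ ≤ AddSubgroup.comap
        (Matrix.mulVecLin !![(n₁:ℂ) + n₂ * s, 0; 0, (n₁:ℂ) - n₂ * s]).toAddMonoidHom Λ := by
      conv_lhs => rw [hΛ]
      refine (AddSubgroup.closure_le _).mpr ?_
      rintro x hx
      simp only [Set.mem_insert_iff, Set.mem_singleton_iff] at hx
      have key : ∀ w₁ w₂ : Fin 2 → ℂ, w₁ ∈ Λ → w₂ ∈ Λ → ∀ k₁ k₂ : ℤ, (k₁ • w₁ + k₂ • w₂) ∈ Λ :=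
        fun w₁ w₂ h₁ h₂ k₁ k₂ => AddSubgroup.add_mem _ (AddSubgroup.zsmul_mem _ h₁ _) (AddSubgroup.zsmul_mem _ h₂ _)
      rcases hx with rfl | rfl | rfl | rfl <;>
        simp only [SetLike.mem_coe, AddSubgroup.mem_comap, LinearMap.toAddMonoidHom_coe, Matrix.mulVecLin_apply]
      · have : Matrix.mulVec !![(n₁:ℂ) + n₂ * s, 0; 0, (n₁:ℂ) - n₂ * s] v1
            = n₁ • v1 + n₂ • v3 := by
          funext i; fin_cases i <;>
            simp [Matrix.mulVec, dotProduct, Fin.sum_univ_two, hv1def, hv3def,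
              zsmul_eq_mul] <;> ring
        rw [this]; exact key _ _ hv1m hv3m _ _
      · have : Matrix.mulVec !![(n₁:ℂ) + n₂ * s, 0; 0, (n₁:ℂ) - n₂ * s] v2
            = n₁ • v2 + n₂ • v4 := by
          funext i; fin_cases i <;>
            simp [Matrix.mulVec, dotProduct, Fin.sum_univ_two, hv2def, hv4def,
              zsmul_eq_mul] <;> ring
        rw [this]; exact key _ _ hv2m hv4m _ _
      · have : Matrix.mulVec !![(n₁:ℂ) + n₂ * s, 0; 0, (n₁:ℂ) - n₂ * s] v3
            = (-(m:ℤ)*n₂) • v1 + n₁ • v3 := by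
          funext i; fin_cases i
          · simp [Matrix.mulVec, dotProduct, Fin.sum_univ_two, hv1def, hv3def, zsmul_eq_mul]
            push_cast
            linear_combination (n₂:ℂ) * hs2
          · simp [Matrix.mulVec, dotProduct, Fin.sum_univ_two, hv1def, hv3def, zsmul_eq_mul]
            push_cast
            linear_combination (n₂:ℂ) * hs2
        rw [this]; exact key _ _ hv1m hv3m _ _
      · have : Matrix.mulVec !![(n₁:ℂ) + n₂ * s, 0; 0, (n₁:ℂ) - n₂ * s] v4
            = (-(m:ℤ)*n₂) • v2 + n₁ • v4 := by
          funext i; fin_cases i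
          · simp [Matrix.mulVec, dotProduct, Fin.sum_univ_two, hv2def, hv4def, zsmul_eq_mul]
            push_cast
            linear_combination ((n₂:ℂ)*(1+r*Complex.I)) * hs2
          · simp [Matrix.mulVec, dotProduct, Fin.sum_univ_two, hv2def, hv4def, zsmul_eq_mul]
            push_cast
            linear_combination ((n₂:ℂ)*r*Complex.I) * hs2
        rw [this]; exact key _ _ hv2m hv4m _ _
    simpa using hcomap hv
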